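/- Let S be a finite set of integers containing -1 with all other elements non-negative, with at least one positive element or containing 0 together with some element ≥ 1 (i.e., S ≠ {-1,0}). Define S'(u) = ∑_{s∈S} s·u^{s-1} (derivative of the characteristic Laurent polynomial S(u) = ∑_{s∈S} u^s) for u > 0. Then there exists a unique τ > 0 with S'(τ) = 0, and τ ≤ 1, with equality τ = 1 if and only if S = {-1,0,1} or S = {-1,1}. -/

import Mathlib

/-- For a Łukasiewicz step set `S` (a finite set of integers containing
`-1`, all other elements non-negative, and containing some element `≥ 1`, i.e.
`S ≠ {-1, 0}`), the derivative `S'(u) = ∑_{s ∈ S} s·u^(s-1)` of the characteristic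
Laurent polynomial has a unique positive root `τ`, and any such root satisfies `τ ≤ 1`,
with `τ = 1` iff `S = {-1, 0, 1}` or `S = {-1, 1}`. -/
theorem lukasiewicz_structural_constant
    (S : Finset ℤ) (hneg : (-1 : ℤ) ∈ S)
    (hnn : ∀ s ∈ S, s ≠ -1 → 0 ≤ s)
    (hpos : ∃ s ∈ S, 1 ≤ s) :
    (∃! τ : ℝ, 0 < τ ∧ ∑ s ∈ S, (s : ℝ) * τ ^ (s - 1) = 0) ∧
    (∀ τ : ℝ, 0 < τ → ∑ s ∈ S, (s : ℝ) * τ ^ (s - 1) = 0 →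
      τ ≤ 1 ∧ (τ = 1 ↔ S = {-1, 0, 1} ∨ S = {-1, 1})) := by
  set P : Finset ℤ := S.filter (fun s => 0 < s) with hP
  obtain ⟨s₀, hs₀S, hs₀⟩ := hpos
  have hs₀P : s₀ ∈ P := by
    rw [hP, Finset.mem_filter]; exact ⟨hs₀S, by omega⟩
  have hPne : P.Nonempty := ⟨s₀, hs₀P⟩
  have hPpos : ∀ s ∈ P, 0 < s := fun s hs => (Finset.mem_filter.mp hs).2
  have hPS : ∀ s ∈ P, s ∈ S := fun s hs => (Finset.mem_filter.mp hs).1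
  set h : ℝ → ℝ := fun t => ∑ s ∈ P, (s : ℝ) * t ^ (s + 1).toNat with hh
  -- key: f τ = 0 ↔ h τ = 1
  have key : ∀ τ : ℝ, 0 < τ →
      ((∑ s ∈ S, (s : ℝ) * τ ^ (s - 1) = 0) ↔ h τ = 1) := by
    intro τ hτ
    have hτ0 : (τ : ℝ) ≠ 0 := ne_of_gt hτ
    have h2 : (τ ^ 2 : ℝ) ≠ 0 := pow_ne_zero _ hτ0
    have hsplit : ∑ s ∈ S, (s : ℝ) * τ ^ (s - 1)
        = (∑ s ∈ P, (s : ℝ) * τ ^ (s - 1))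
          + ∑ s ∈ S.filter (fun s => ¬ 0 < s), (s : ℝ) * τ ^ (s - 1) := by
      rw [hP, Finset.sum_filter_add_sum_filter_not]
    have hrest : ∑ s ∈ S.filter (fun s => ¬ 0 < s), (s : ℝ) * τ ^ (s - 1)
        = ((-1 : ℤ) : ℝ) * τ ^ ((-1 : ℤ) - 1) := by
      apply Finset.sum_eq_single_of_mem
      · rw [Finset.mem_filter]; exact ⟨hneg, by omega⟩
      · intro b hb hbne
        rw [Finset.mem_filter] at hb
        have hb0 : b = 0 := by have := hnn b hb.1 hbne; omega
        simp [hb0]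
    have hneg2 : τ ^ ((-1 : ℤ) - 1) = (τ ^ 2)⁻¹ := by
      rw [show (-1 : ℤ) - 1 = -((2 : ℕ) : ℤ) by norm_num, zpow_neg, zpow_natCast]
    have hmul : h τ = τ ^ 2 * ∑ s ∈ P, (s : ℝ) * τ ^ (s - 1) := by
      rw [hh, Finset.mul_sum]
      apply Finset.sum_congr rfl
      intro s hs
      have hs1 : 0 < s := hPpos s hs
      rw [← zpow_natCast τ (s + 1).toNat, Int.toNat_of_nonneg (by omega),
        show s + 1 = ((2 : ℕ) : ℤ) + (s - 1) by push_cast; ring,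
        zpow_add₀ hτ0, zpow_natCast]
      ring
    rw [hsplit, hrest, hneg2, hmul]
    constructor
    · intro hz
      have : ∑ s ∈ P, (s : ℝ) * τ ^ (s - 1) = (τ ^ 2)⁻¹ := by linarith
      rw [this, mul_inv_cancel₀ h2]
    · intro hz
      have : ∑ s ∈ P, (s : ℝ) * τ ^ (s - 1) = (τ ^ 2)⁻¹ := by
        field_simp at hz ⊢
        linarith
      rw [this]
      field_simp
      norm_num
  have hmono : StrictMonoOn h (Set.Ici 0) := by
    intro a ha b hb hab
    apply Finset.sum_lt_sum_of_nonempty hPne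
    intro s hs
    have hs1 : 0 < s := hPpos s hs
    have hpow : a ^ (s + 1).toNat < b ^ (s + 1).toNat :=
      pow_lt_pow_left₀ hab ha (by omega)
    exact mul_lt_mul_of_pos_left hpow (by exact_mod_cast hs1)
  have hcont : Continuous h := by
    apply continuous_finset_sum
    intro s _
    exact continuous_const.mul (continuous_pow _)
  have h0 : h 0 = 0 := Finset.sum_eq_zero fun s hs => by
    rw [zero_pow (by have := hPpos s hs; omega), mul_zero]
  have h1sum : h 1 = ∑ s ∈ P, (s : ℝ) := by
    simp [hh]
  have h1ge : (1 : ℝ) ≤ h 1 := by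
    rw [h1sum]
    calc (1 : ℝ) ≤ (s₀ : ℝ) := by exact_mod_cast hs₀
      _ ≤ ∑ s ∈ P, (s : ℝ) :=
        Finset.single_le_sum (fun s hs => by exact_mod_cast (hPpos s hs).le) hs₀P
  -- existence of the root of h = 1
  obtain ⟨τ₀, hτ₀Icc, hτ₀eq⟩ : ∃ t ∈ Set.Icc (0 : ℝ) 1, h t = 1 := by
    have := intermediate_value_Icc (by norm_num : (0:ℝ) ≤ 1) hcont.continuousOn
    have hmem : (1 : ℝ) ∈ Set.Icc (h 0) (h 1) := by
      rw [h0]; exact ⟨zero_le_one, h1ge⟩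
    obtain ⟨t, ht, hteq⟩ := this hmem
    exact ⟨t, ht, hteq⟩
  have hτ₀pos : 0 < τ₀ := by
    rcases lt_or_eq_of_le hτ₀Icc.1 with h' | h'
    · exact h'
    · exfalso; rw [← h', h0] at hτ₀eq; norm_num at hτ₀eq
  have huniq : ∀ y : ℝ, 0 < y → h y = 1 → y = τ₀ := by
    intro y hy hyeq
    exact hmono.injOn (Set.mem_Ici.mpr hy.le) (Set.mem_Ici.mpr hτ₀pos.le)
      (by rw [hyeq, hτ₀eq])
  constructor
  · exact ⟨τ₀, ⟨hτ₀pos, (key τ₀ hτ₀pos).mpr hτ₀eq⟩,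
      fun y hy => huniq y hy.1 ((key y hy.1).mp hy.2)⟩
  · intro τ hτ hroot
    have hτ1 : h τ = 1 := (key τ hτ).mp hroot
    have hle : τ ≤ 1 := by
      by_contra hgt
      push_neg at hgt
      have := hmono (Set.mem_Ici.mpr zero_le_one) (Set.mem_Ici.mpr (by linarith)) hgt
      rw [hτ1] at this
      linarith
    refine ⟨hle, ?_, ?_⟩
    · -- τ = 1 → S is one of the two sets
      intro hτeq
      subst hτeq
      have hsum1 : ∑ s ∈ P, (s : ℝ) = 1 := by rw [← h1sum]; exact hτ1
      have hsumZ : ∑ s ∈ P, s = 1 := by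
        rw [← Int.cast_sum] at hsum1; exact_mod_cast hsum1
      have hcard : P.card = 1 := by
        have hle1 : (P.card : ℤ) * 1 ≤ ∑ s ∈ P, s := by
          have := Finset.card_nsmul_le_sum P (fun s => s) 1 (fun s hs => hPpos s hs)
          simpa using this
        have : 1 ≤ P.card := Finset.card_pos.mpr hPne
        omega
      obtain ⟨a, haP⟩ := Finset.card_eq_one.mp hcard
      have ha1 : a = 1 := by
        rw [haP, Finset.sum_singleton] at hsumZ; exact hsumZ
      have hP1 : P = {1} := by rw [haP, ha1]
      have h1S : (1 : ℤ) ∈ S := hPS 1 (by rw [hP1]; exact Finset.mem_singleton_self 1)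
      have hsub : ∀ s ∈ S, s = -1 ∨ s = 0 ∨ s = 1 := by
        intro s hs
        by_cases hsneg : s = -1
        · left; exact hsneg
        · have hs0 : 0 ≤ s := hnn s hs hsneg
          by_cases hsp : 0 < s
          · right; right
            have : s ∈ P := by rw [hP, Finset.mem_filter]; exact ⟨hs, hsp⟩
            rw [hP1, Finset.mem_singleton] at this; exact this
          · right; left; omega
      by_cases h0S : (0 : ℤ) ∈ S
      · left
        ext x
        simp only [Finset.mem_insert, Finset.mem_singleton]
        constructor
        · intro hx; exact hsub x hx
        · rintro (rfl | rfl | rfl) <;> assumption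
      · right
        ext x
        simp only [Finset.mem_insert, Finset.mem_singleton]
        constructor
        · intro hx
          rcases hsub x hx with rfl | rfl | rfl
          · left; rfl
          · exact absurd hx h0S
          · right; rfl
        · rintro (rfl | rfl) <;> assumption
    · -- S is one of the two sets → τ = 1
      intro hS
      have hroot1 : ∑ s ∈ S, (s : ℝ) * (1 : ℝ) ^ (s - 1) = 0 := by
        rcases hS with rfl | rfl <;>
        · simp only [one_zpow, mul_one]
          norm_num [Finset.sum_insert, Finset.mem_insert, Finset.mem_singleton]
      have h11 : h 1 = 1 := (key 1 one_pos).mp hroot1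
      exact hmono.injOn (Set.mem_Ici.mpr hτ.le) (Set.mem_Ici.mpr zero_le_one)
        (by rw [hτ1, h11])
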